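/- arXiv:1412.8242 — 6 statements merged into one kernel-verified Lean document; each statement's English description precedes it below -/
import Mathlib

section
/- Let X be a metric space, f : X → X a map, U ⊆ X a subset and z₀ ∈ X a point such that: z₀ belongs to the closure of U; U ⊆ f(U); and dist(f(z), z₀) ≥ dist(z, z₀) for every z in the closure of U. Then for every r > 0 the set U_r = U ∩ {z : dist(z, z₀) < r} satisfies: U_r is nonempty; z₀ belongs to the closure of U_r; U_r ⊆ f(U_r); and dist(f(z), z₀) ≥ dist(z, z₀) for every z in the closure of U_r. -/
/-- Condition (*) of the paper can be localized: if `z₀ ∈ closure U`, `U ⊆ f(U)` and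
`dist (f z) z₀ ≥ dist z z₀` for all `z ∈ closure U`, then for every `r > 0` the set
`U_r = U ∩ {z | dist z z₀ < r}` satisfies the same conditions and is nonempty. -/
theorem star_condition_localizes {X : Type*} [MetricSpace X] (f : X → X) (U : Set X) (z₀ : X)
    (hcl : z₀ ∈ closure U) (hUf : U ⊆ f '' U)
    (hdist : ∀ z ∈ closure U, dist (f z) z₀ ≥ dist z z₀) :
    ∀ r > (0 : ℝ),
      (U ∩ {z | dist z z₀ < r}).Nonempty ∧
      z₀ ∈ closure (U ∩ {z | dist z z₀ < r}) ∧
      (U ∩ {z | dist z z₀ < r}) ⊆ f '' (U ∩ {z | dist z z₀ < r}) ∧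
      ∀ z ∈ closure (U ∩ {z | dist z z₀ < r}), dist (f z) z₀ ≥ dist z z₀ := by
  intro r hr
  have hclosure : z₀ ∈ closure (U ∩ {z | dist z z₀ < r}) := by
    rw [Metric.mem_closure_iff] at hcl ⊢
    intro ε hε
    obtain ⟨b, hbU, hbd⟩ := hcl (min ε r) (lt_min hε hr)
    exact ⟨b, ⟨hbU, by simpa [dist_comm] using hbd.trans_le (min_le_right ε r)⟩,
      hbd.trans_le (min_le_left ε r)⟩
  refine ⟨?_, hclosure, ?_, ?_⟩
  · rw [Metric.mem_closure_iff] at hclosure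
    obtain ⟨b, hb, -⟩ := hclosure r hr
    exact ⟨b, hb⟩
  · rintro z ⟨hzU, hzr⟩
    obtain ⟨w, hwU, hwz⟩ := hUf hzU
    refine ⟨w, ⟨hwU, ?_⟩, hwz⟩
    have := hdist w (subset_closure hwU)
    rw [hwz] at this
    exact lt_of_le_of_lt this hzr
  · intro z hz
    exact hdist z (closure_mono Set.inter_subset_left hz)
end

section
/- Let f : ℝ → ℝ be a strictly increasing homeomorphism of the real line possessing at least one fixed point. Then there exist a point z₀ ∈ ℝ with f(z₀) = z₀, a nonempty open set U ⊆ ℝ, and a map g equal to either f or f⁻¹, such that: z₀ belongs to the closure of U; U ⊆ g(U); and |g(z) − z₀| ≥ |z − z₀| for every z in the closure of U. -/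
/-- For a strictly increasing homeomorphism `f` of the real line with at least one fixed
point, there is a fixed point `z₀`, a nonempty open set `U`, and `g` equal to `f` or `f⁻¹`
such that `z₀ ∈ closure U`, `U ⊆ g(U)`, and `|g z − z₀| ≥ |z − z₀|` for all
`z ∈ closure U` (condition (*) of the paper). -/
theorem exists_point_satisfying_star_on_line (f : ℝ ≃ₜ ℝ) (hf : StrictMono f)
    (hfix : ∃ x : ℝ, f x = x) :
    ∃ (z₀ : ℝ) (U : Set ℝ) (g : ℝ → ℝ),
      (g = ⇑f ∨ g = ⇑f.symm) ∧
      f z₀ = z₀ ∧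
      IsOpen U ∧ U.Nonempty ∧
      z₀ ∈ closure U ∧
      U ⊆ g '' U ∧
      ∀ z ∈ closure U, |g z - z₀| ≥ |z - z₀| := by
  obtain ⟨x₀, hx₀⟩ := hfix
  have hsymm : StrictMono f.symm := by
    intro u v huv
    rw [← hf.lt_iff_lt]
    simpa using huv
  by_cases h : ∃ y, x₀ < y ∧ f y ≠ y
  · obtain ⟨y, hy, hfy⟩ := h
    set F := Set.Icc x₀ y ∩ {z | f z = z} with hF
    have hFne : F.Nonempty := ⟨x₀, ⟨le_refl _, hy.le⟩, hx₀⟩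
    have hFclosed : IsClosed F :=
      isClosed_Icc.inter (isClosed_eq f.continuous continuous_id)
    have hFbdd : BddAbove F := ⟨y, fun z hz => hz.1.2⟩
    have haF : sSup F ∈ F := hFclosed.csSup_mem hFne hFbdd
    set a := sSup F with hadef
    have ha : f a = a := haF.2
    have hax : x₀ ≤ a := haF.1.1
    have hay : a < y := lt_of_le_of_ne haF.1.2 (fun h' => hfy (by rw [← h', ha, h']))
    have hnofix : ∀ z ∈ Set.Ioc a y, f z ≠ z := by
      intro z hz hzf
      exact absurd (le_csSup hFbdd ⟨⟨hax.trans hz.1.le, hz.2⟩, hzf⟩) (not_le.mpr hz.1)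
    have hc : Continuous fun w => f w - w := f.continuous.sub continuous_id
    have hclU : closure (Set.Ioo a y) = Set.Icc a y := closure_Ioo hay.ne
    rcases lt_or_gt_of_ne hfy with hyl | hyg
    · -- f y < y : use g = f.symm
      have hneg : ∀ z ∈ Set.Ioc a y, f z < z := by
        intro z hz
        rcases lt_trichotomy (f z) z with h1 | h1 | h1
        · exact h1
        · exact absurd h1 (hnofix z hz)
        · -- f z > z, f y < y : IVT gives fixed point in (z, y)
          have hzy : z < y := by
            rcases eq_or_lt_of_le hz.2 with rfl | h2
            · exact absurd hyl (not_lt.mpr h1.le)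
            · exact h2
          have h0 : (0:ℝ) ∈ Set.Ioo (f y - y) (f z - z) := ⟨by linarith, by linarith⟩
          obtain ⟨c, hc1, hc2⟩ := intermediate_value_Ioo' hzy.le hc.continuousOn h0
          exact absurd (sub_eq_zero.mp hc2)
            (hnofix c ⟨hz.1.trans hc1.1, hc1.2.le⟩)
      refine ⟨a, Set.Ioo a y, ⇑f.symm, Or.inr rfl, ha, isOpen_Ioo,
        Set.nonempty_Ioo.mpr hay, ?_, ?_, ?_⟩
      · rw [hclU]; exact ⟨le_refl _, hay.le⟩
      · intro z hz
        refine ⟨f z, ⟨?_, ?_⟩, f.symm_apply_apply z⟩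
        · have := hf hz.1; rwa [ha] at this
        · exact (hneg z ⟨hz.1, hz.2.le⟩).trans hz.2
      · intro z hz
        rw [hclU] at hz
        have hle : f z ≤ z := by
          rcases eq_or_lt_of_le hz.1 with rfl | h1
          · exact le_of_eq ha
          · exact (hneg z ⟨h1, hz.2⟩).le
        have h2 : z ≤ f.symm z := by
          have := hsymm.monotone hle
          rwa [f.symm_apply_apply] at this
        rw [abs_of_nonneg (by linarith [hz.1] : (0:ℝ) ≤ f.symm z - a),
          abs_of_nonneg (by linarith [hz.1] : (0:ℝ) ≤ z - a)]
        linarith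
    · -- f y > y : use g = f
      have hpos : ∀ z ∈ Set.Ioc a y, z < f z := by
        intro z hz
        rcases lt_trichotomy (f z) z with h1 | h1 | h1
        · have hzy : z < y := by
            rcases eq_or_lt_of_le hz.2 with rfl | h2
            · exact absurd hyg (not_lt.mpr h1.le)
            · exact h2
          have h0 : (0:ℝ) ∈ Set.Ioo (f z - z) (f y - y) := ⟨by linarith, by linarith⟩
          obtain ⟨c, hc1, hc2⟩ := intermediate_value_Ioo hzy.le hc.continuousOn h0
          exact absurd (sub_eq_zero.mp hc2)
            (hnofix c ⟨hz.1.trans hc1.1, hc1.2.le⟩)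
        · exact absurd h1 (hnofix z hz)
        · exact h1
      refine ⟨a, Set.Ioo a y, ⇑f, Or.inl rfl, ha, isOpen_Ioo,
        Set.nonempty_Ioo.mpr hay, ?_, ?_, ?_⟩
      · rw [hclU]; exact ⟨le_refl _, hay.le⟩
      · intro z hz
        refine ⟨f.symm z, ⟨?_, ?_⟩, f.apply_symm_apply z⟩
        · have : f a < f (f.symm z) := by rw [ha, f.apply_symm_apply]; exact hz.1
          exact hf.lt_iff_lt.mp this
        · have : f (f.symm z) < f y := by
            rw [f.apply_symm_apply]
            exact hz.2.trans hyg
          exact hf.lt_iff_lt.mp this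
      · intro z hz
        rw [hclU] at hz
        have hle : z ≤ f z := by
          rcases eq_or_lt_of_le hz.1 with rfl | h1
          · exact le_of_eq ha.symm
          · exact (hpos z ⟨h1, hz.2⟩).le
        rw [abs_of_nonneg (by linarith [hz.1] : (0:ℝ) ≤ f z - a),
          abs_of_nonneg (by linarith [hz.1] : (0:ℝ) ≤ z - a)]
        linarith
  · -- everything right of x₀ is fixed
    push_neg at h
    refine ⟨x₀, Set.Ioo x₀ (x₀ + 1), ⇑f, Or.inl rfl, hx₀, isOpen_Ioo,
      Set.nonempty_Ioo.mpr (by linarith), ?_, ?_, ?_⟩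
    · rw [closure_Ioo (by linarith : x₀ ≠ x₀ + 1)]
      exact ⟨le_refl _, by linarith⟩
    · intro u hu
      exact ⟨u, hu, h u hu.1⟩
    · intro z hz
      rw [closure_Ioo (by linarith : x₀ ≠ x₀ + 1)] at hz
      have : f z = z := by
        rcases eq_or_lt_of_le hz.1 with rfl | h1
        · exact hx₀
        · exact h z h1
      rw [this]
end

section
/- Let g and h be flows on a topological space X satisfying the horocycle commutation relation, and let M ⊆ X satisfy h^s(M) = M for every s ∈ ℝ. Define L = ⋂_{t₀∈ℝ} closure(⋃_{t≥t₀} g^t(M)). Then h^s(L) = L for every s ∈ ℝ. -/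
/-- If the flows `g` and `h` satisfy the horocycle commutation relation
`g^t ∘ h^s = h^{s·e^{−t}} ∘ g^t` and `M` is `h`-invariant, then the set
`L = ⋂_{t₀∈ℝ} closure (⋃_{t ≥ t₀} g^t(M))` is invariant under `h^s` for every `s`. -/
theorem horocycle_image_iInter_closure_iUnion {X : Type*} [TopologicalSpace X]
    (g h : Flow ℝ X)
    (hcomm : ∀ (t s : ℝ) (x : X), g t (h s x) = h (s * Real.exp (-t)) (g t x))
    (M : Set X) (hM : ∀ s : ℝ, h s '' M = M) :
    ∀ s : ℝ,
      h s '' (⋂ t₀ : ℝ, closure (⋃ t ∈ Set.Ici t₀, g t '' M)) =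
        ⋂ t₀ : ℝ, closure (⋃ t ∈ Set.Ici t₀, g t '' M) := by
  intro s
  have key : ∀ t : ℝ, h s '' (g t '' M) = g t '' M := by
    intro t
    have hfun : (fun x => h s (g t x)) = fun x => g t (h (s * Real.exp t) x) := by
      funext x
      rw [hcomm t (s * Real.exp t) x, mul_assoc, ← Real.exp_add, add_neg_cancel,
        Real.exp_zero, mul_one]
    calc h s '' (g t '' M) = (fun x => h s (g t x)) '' M := by
          rw [Set.image_image]
      _ = (fun x => g t (h (s * Real.exp t) x)) '' M := by rw [hfun]
      _ = g t '' (h (s * Real.exp t) '' M) := by rw [Set.image_image]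
      _ = g t '' M := by rw [hM]
  have he : (h s : X → X) = ⇑(h.toHomeomorph s) := rfl
  rw [he, Set.image_iInter (h.toHomeomorph s).bijective]
  refine Set.iInter_congr fun t₀ => ?_
  rw [(h.toHomeomorph s).image_closure]
  rw [Set.image_iUnion₂]
  exact congrArg closure (Set.iUnion₂_congr fun t ht => by rw [← he, key])
end

section
/- Let X be a nonempty compact Hausdorff topological space, let g and h be flows on X satisfying the horocycle commutation relation, and assume the joint action of g and h is minimal. Let M ⊆ X be a nonempty set with h^s(M) = M for every s ∈ ℝ. Then ⋂_{t₀∈ℝ} closure(⋃_{t≥t₀} g^t(M)) = X. In particular, ⋃_{t≥0} g^t(M) is dense in X. -/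
/-- If `X` is a nonempty compact Hausdorff space, the flows `g` and `h` satisfy the
horocycle commutation relation, the joint action of `g` and `h` is minimal, and
`M` is a nonempty `h`-invariant set, then `⋂_{t₀∈ℝ} closure (⋃_{t ≥ t₀} g^t(M)) = X`;
in particular `⋃_{t ≥ 0} g^t(M)` is dense in `X`. -/
theorem iInter_closure_iUnion_eq_univ {X : Type*} [TopologicalSpace X]
    [CompactSpace X] [T2Space X] [Nonempty X]
    (g h : Flow ℝ X)
    (hcomm : ∀ (t s : ℝ) (x : X), g t (h s x) = h (s * Real.exp (-t)) (g t x))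
    (hmin : ∀ C : Set X, IsClosed C → C.Nonempty →
      (∀ t : ℝ, g t '' C ⊆ C) → (∀ s : ℝ, h s '' C ⊆ C) → C = Set.univ)
    (M : Set X) (hMne : M.Nonempty) (hM : ∀ s : ℝ, h s '' M = M) :
    (⋂ t₀ : ℝ, closure (⋃ t ∈ Set.Ici t₀, g t '' M)) = Set.univ ∧
    Dense (⋃ t ∈ Set.Ici (0 : ℝ), g t '' M) := by
  set U : ℝ → Set X := fun t₀ => ⋃ t ∈ Set.Ici t₀, g t '' M with hU
  -- g t maps U t₀ onto U (t₀ + t)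
  have hgU : ∀ t t₀ : ℝ, g t '' U t₀ = U (t₀ + t) := by
    intro t t₀
    ext x
    simp only [hU, Set.mem_image, Set.mem_iUnion, Set.mem_Ici]
    constructor
    · rintro ⟨y, ⟨s, hs, m, hm, rfl⟩, rfl⟩
      exact ⟨t + s, by linarith, m, hm, g.map_add t s m⟩
    · rintro ⟨s, hs, m, hm, rfl⟩
      exact ⟨g (s - t) m, ⟨s - t, by linarith, m, hm, rfl⟩,
        by rw [← g.map_add]; ring_nf⟩
  -- each g t '' M is h-invariant
  have hhg : ∀ (s t : ℝ), h s '' (g t '' M) = g t '' M := by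
    intro s t
    have key : ∀ m : X, h s (g t m) = g t (h (s * Real.exp t) m) := by
      intro m
      rw [hcomm t (s * Real.exp t) m, mul_assoc, ← Real.exp_add, add_neg_cancel,
        Real.exp_zero, mul_one]
    calc h s '' (g t '' M) = g t '' (h (s * Real.exp t) '' M) := by
          rw [← Set.image_comp, ← Set.image_comp]
          exact Set.image_congr fun m _ => key m
      _ = g t '' M := by rw [hM]
  have hhU : ∀ s t₀ : ℝ, h s '' U t₀ = U t₀ := by
    intro s t₀
    simp only [hU, Set.image_iUnion]
    exact Set.iUnion_congr fun t => Set.iUnion_congr fun _ => hhg s t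
  set C : Set X := ⋂ t₀ : ℝ, closure (U t₀) with hC
  have hCclosed : IsClosed C := isClosed_iInter fun _ => isClosed_closure
  -- nonempty: directed family of nonempty compact closed sets
  have hUne : ∀ t₀ : ℝ, (closure (U t₀)).Nonempty := by
    intro t₀
    obtain ⟨m, hm⟩ := hMne
    exact ⟨g t₀ m, subset_closure (Set.mem_biUnion (Set.mem_Ici.2 le_rfl) ⟨m, hm, rfl⟩)⟩
  have hmono : ∀ a b : ℝ, a ≤ b → U b ⊆ U a := by
    intro a b hab x hx
    simp only [hU, Set.mem_iUnion, Set.mem_Ici] at hx ⊢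
    obtain ⟨t, ht, hx⟩ := hx
    exact ⟨t, hab.trans ht, hx⟩
  have hCne : C.Nonempty := by
    apply IsCompact.nonempty_iInter_of_directed_nonempty_isCompact_isClosed
      (fun t₀ => closure (U t₀))
    · intro a b
      exact ⟨max a b, closure_mono (hmono a _ (le_max_left a b)),
        closure_mono (hmono b _ (le_max_right a b))⟩
    · exact hUne
    · exact fun _ => IsClosed.isCompact isClosed_closure
    · exact fun _ => isClosed_closure
  have hCg : ∀ t : ℝ, g t '' C ⊆ C := by
    intro t x hx
    rw [Set.mem_iInter]
    intro t₀
    obtain ⟨y, hy, rfl⟩ := hx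
    have hy' : y ∈ closure (U (t₀ - t)) := Set.mem_iInter.1 hy (t₀ - t)
    have h1 : g t '' closure (U (t₀ - t)) = closure (g t '' U (t₀ - t)) :=
      (g.toHomeomorph t).image_closure _
    have : g t y ∈ g t '' closure (U (t₀ - t)) := ⟨y, hy', rfl⟩
    rw [h1, hgU, sub_add_cancel] at this
    exact this
  have hCh : ∀ s : ℝ, h s '' C ⊆ C := by
    intro s x hx
    rw [Set.mem_iInter]
    intro t₀
    obtain ⟨y, hy, rfl⟩ := hx
    have hy' : y ∈ closure (U t₀) := Set.mem_iInter.1 hy t₀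
    have h1 : h s '' closure (U t₀) = closure (h s '' U t₀) :=
      (h.toHomeomorph s).image_closure _
    have : h s y ∈ h s '' closure (U t₀) := ⟨y, hy', rfl⟩
    rw [h1, hhU] at this
    exact this
  have hCuniv : C = Set.univ := hmin C hCclosed hCne hCg hCh
  refine ⟨hCuniv, ?_⟩
  rw [dense_iff_closure_eq]
  apply Set.eq_univ_of_univ_subset
  rw [← hCuniv]
  exact Set.iInter_subset (fun t₀ => closure (U t₀)) 0
end

section
/- Let X be a nonempty compact Hausdorff topological space, let g and h be flows on X satisfying the horocycle commutation relation, and assume the joint action of g and h is minimal. Let M ⊆ X be a nonempty closed set with h^s(M) = M for every s ∈ ℝ. Suppose there are sets K ⊆ V ⊆ X such that: V has nonempty interior; for every y ∈ V there exists s ∈ ℝ with h^s(y) ∈ K; and for every x ∈ K and every t ≥ 0 one has g^{−t}(x) ∈ V. Then M ∩ V ≠ ∅. -/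
/-- The core dynamical argument of Theorem 1.2: if `X` is a nonempty compact Hausdorff
space, `g` and `h` are flows satisfying the horocycle commutation relation whose joint
action is minimal, `M` is a nonempty closed `h`-invariant set, and `K ⊆ V ⊆ X` are such
that `V` has nonempty interior, every point of `V` can be moved into `K` by the flow `h`,
and `g^{−t}(K) ⊆ V` for all `t ≥ 0`, then `M` meets `V`. -/
theorem minimal_set_meets_flow_box {X : Type*} [TopologicalSpace X]
    [CompactSpace X] [T2Space X] [Nonempty X]
    (g h : Flow ℝ X)
    (hcomm : ∀ (t s : ℝ) (x : X), g t (h s x) = h (s * Real.exp (-t)) (g t x))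
    (hmin : ∀ C : Set X, IsClosed C → C.Nonempty →
      (∀ t : ℝ, g t '' C ⊆ C) → (∀ s : ℝ, h s '' C ⊆ C) → C = Set.univ)
    (M : Set X) (hMne : M.Nonempty) (hMcl : IsClosed M) (hM : ∀ s : ℝ, h s '' M = M)
    (K V : Set X) (hKV : K ⊆ V) (hVint : (interior V).Nonempty)
    (hhit : ∀ y ∈ V, ∃ s : ℝ, h s y ∈ K)
    (hback : ∀ x ∈ K, ∀ t : ℝ, 0 ≤ t → g (-t) x ∈ V) :
    (M ∩ V).Nonempty := by
  -- reversed commutation relation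
  have key : ∀ (s t : ℝ) (x : X), h s (g t x) = g t (h (s * Real.exp t) x) := by
    intro s t x
    rw [hcomm t (s * Real.exp t) x, mul_assoc, ← Real.exp_add, add_neg_cancel,
      Real.exp_zero, mul_one]
  -- the sets S T = ⋃ t ≥ T, gᵗ M and their closures A T
  set S : ℝ → Set X := fun T => ⋃ t ∈ Set.Ici T, g t '' M with hSdef
  set A : ℝ → Set X := fun T => closure (S T) with hAdef
  have hSne : ∀ T, (S T).Nonempty := by
    intro T
    obtain ⟨m, hm⟩ := hMne
    exact ⟨g T m, Set.mem_biUnion (le_refl T) ⟨m, hm, rfl⟩⟩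
  have hAanti : ∀ T T' : ℝ, T ≤ T' → A T' ⊆ A T := by
    intro T T' hTT'
    exact closure_mono (Set.biUnion_subset_biUnion_left fun t ht => le_trans hTT' ht)
  -- S T is h-invariant
  have hSh : ∀ (s T : ℝ), h s '' S T ⊆ S T := by
    rintro s T _ ⟨y, hy, rfl⟩
    rw [Set.mem_iUnion₂] at hy
    obtain ⟨t, ht, m, hm, rfl⟩ := hy
    rw [key s t m]
    have hm' : h (s * Real.exp t) m ∈ M := by
      rw [← hM (s * Real.exp t)]; exact ⟨m, hm, rfl⟩
    exact Set.mem_biUnion ht ⟨_, hm', rfl⟩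
  have hAh : ∀ (s T : ℝ), h s '' A T ⊆ A T := by
    intro s T
    calc h s '' A T ⊆ closure (h s '' S T) :=
          image_closure_subset_closure_image (h.continuous_toFun s)
      _ ⊆ A T := closure_mono (hSh s T)
  -- g shifts S T
  have hSg : ∀ (t' T : ℝ), g t' '' S T ⊆ S (T + t') := by
    rintro t' T _ ⟨y, hy, rfl⟩
    rw [Set.mem_iUnion₂] at hy
    obtain ⟨t, ht, m, hm, rfl⟩ := hy
    rw [← g.map_add t' t m]
    exact Set.mem_biUnion (by simp only [Set.mem_Ici] at ht ⊢; linarith) ⟨m, hm, rfl⟩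
  have hAg : ∀ (t' T : ℝ), g t' '' A T ⊆ A (T + t') := by
    intro t' T
    calc g t' '' A T ⊆ closure (g t' '' S T) :=
          image_closure_subset_closure_image (g.continuous_toFun t')
      _ ⊆ A (T + t') := closure_mono (hSg t' T)
  -- the ω-limit set C
  set C : Set X := ⋂ T : ℝ, A T with hCdef
  have hCne : C.Nonempty := by
    apply IsCompact.nonempty_iInter_of_directed_nonempty_isCompact_isClosed A
    · intro T T'
      exact ⟨max T T', hAanti T (max T T') (le_max_left _ _),
        hAanti T' (max T T') (le_max_right _ _)⟩
    · exact fun T => (hSne T).closure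
    · exact fun T => isClosed_closure.isCompact
    · exact fun T => isClosed_closure
  have hCcl : IsClosed C := isClosed_iInter fun T => isClosed_closure
  have hCg : ∀ t : ℝ, g t '' C ⊆ C := by
    rintro t _ ⟨x, hx, rfl⟩
    rw [Set.mem_iInter]
    intro T
    have hx' : x ∈ A (T - t) := Set.mem_iInter.mp hx (T - t)
    have := hAg t (T - t) ⟨x, hx', rfl⟩
    rwa [sub_add_cancel] at this
  have hCh : ∀ s : ℝ, h s '' C ⊆ C := by
    rintro s _ ⟨x, hx, rfl⟩
    rw [Set.mem_iInter]
    intro T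
    exact hAh s T ⟨x, Set.mem_iInter.mp hx T, rfl⟩
  have hCuniv : C = Set.univ := hmin C hCcl hCne hCg hCh
  -- hence A 0 = univ, i.e. ⋃ t ≥ 0, gᵗ M is dense
  have hA0 : A 0 = Set.univ :=
    Set.eq_univ_of_univ_subset (hCuniv ▸ Set.iInter_subset A 0)
  have hdense : Dense (S 0) := by
    rw [dense_iff_closure_eq]; exact hA0
  -- find a point of the forward g-orbit of M in the interior of V
  obtain ⟨u, hu⟩ := hVint
  obtain ⟨y, hyS, hyU⟩ := hdense.exists_mem_open isOpen_interior ⟨u, hu⟩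
  rw [Set.mem_iUnion₂] at hyS
  obtain ⟨t, ht, m, hm, rfl⟩ := hyS
  have hyV : g t m ∈ V := interior_subset hyU
  obtain ⟨s, hsK⟩ := hhit _ hyV
  -- rewrite h s (g t m) as g t m' with m' ∈ M
  rw [key s t m] at hsK
  set m' : X := h (s * Real.exp t) m with hm'def
  have hm'M : m' ∈ M := by rw [hm'def, ← hM (s * Real.exp t)]; exact ⟨m, hm, rfl⟩
  have : g (-t) (g t m') ∈ V := hback _ hsK t ht
  rw [← g.map_add, neg_add_cancel, g.map_zero_apply] at this
  exact ⟨m', hm'M, this⟩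
end

section
/- Let G be an abelian subgroup of SL(2,ℝ), acting on the upper half-plane ℍ = { z ∈ ℂ : Im z > 0 } by Möbius transformations. Then the action of G on ℍ is not cocompact: there is no compact set C ⊆ ℍ such that ⋃_{g ∈ G} g·C = ℍ. -/
open UpperHalfPlane Matrix

local notation "SL2R" => Matrix.SpecialLinearGroup (Fin 2) ℝ

namespace AbelianNotCocompact

/-- Action of an upper-triangular matrix on `ℍ`, as a complex number. -/
lemma tri_smul_coe (h : SL2R) (hh : h 1 0 = 0) (z : UpperHalfPlane) :
    ((h • z : UpperHalfPlane) : ℂ) = (h 0 0)^2 * z + (h 0 0) * (h 0 1) := by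
  have hdet : h 0 0 * h 1 1 = 1 := by
    have := h.2
    rw [Matrix.det_fin_two] at this
    rw [hh] at this; linarith
  have h11 : ((h 1 1 : ℝ) : ℂ) ≠ 0 := by
    exact_mod_cast right_ne_zero_of_mul_eq_one hdet
  have hd : ((h 0 0 : ℝ) : ℂ) * ((h 1 1 : ℝ) : ℂ) = 1 := by exact_mod_cast hdet
  rw [specialLinearGroup_apply]
  simp only [coe_mk, algebraMap_apply, Algebra.algebraMap_self, RingHom.id_apply]
  rw [hh]
  push_cast
  rw [zero_mul, zero_add, div_eq_iff h11]
  linear_combination (-(((h 0 0:ℝ):ℂ) * z) - ((h 0 1:ℝ):ℂ)) * hd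

lemma tri_smul_re (h : SL2R) (hh : h 1 0 = 0) (z : UpperHalfPlane) :
    (h • z).re = (h 0 0)^2 * z.re + (h 0 0) * (h 0 1) := by
  have := congrArg Complex.re (tri_smul_coe h hh z)
  simpa [UpperHalfPlane.coe_re, ← Complex.ofReal_pow] using this

lemma tri_smul_im (h : SL2R) (hh : h 1 0 = 0) (z : UpperHalfPlane) :
    (h • z).im = (h 0 0)^2 * z.im := by
  have := congrArg Complex.im (tri_smul_coe h hh z)
  simpa [UpperHalfPlane.coe_im, ← Complex.ofReal_pow] using this

/-- A point vertically above `w` at hyperbolic distance exactly `T`. -/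
lemma exists_above (w : UpperHalfPlane) (T : ℝ) (hT : 0 ≤ T) :
    ∃ z : UpperHalfPlane, z.re = w.re ∧ z.im = w.im * Real.exp T ∧ dist z w = T := by
  refine ⟨⟨⟨w.re, w.im * Real.exp T⟩, ?_⟩, rfl, rfl, ?_⟩
  · have := w.im_pos
    positivity
  · set z : UpperHalfPlane := ⟨⟨w.re, w.im * Real.exp T⟩, by have := w.im_pos; positivity⟩
    have hre : z.re = w.re := rfl
    rw [UpperHalfPlane.dist_of_re_eq hre]
    have him : z.im = w.im * Real.exp T := rfl
    rw [him, Real.log_mul (ne_of_gt w.im_pos) (Real.exp_ne_zero T), Real.log_exp,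
      Real.dist_eq]
    rw [add_sub_cancel_left, abs_of_nonneg hT]

lemma neg_one_smul' (z : UpperHalfPlane) : ((-1 : SL2R) • z) = z := by
  apply UpperHalfPlane.ext
  rw [specialLinearGroup_apply]
  have h00 : ((-1 : SL2R) : Matrix (Fin 2) (Fin 2) ℝ) = -1 := by
    rw [Matrix.SpecialLinearGroup.coe_neg, Matrix.SpecialLinearGroup.coe_one]
  simp only [coe_mk, algebraMap_apply, Algebra.algebraMap_self, RingHom.id_apply, h00]
  simp [Matrix.one_apply]

lemma entry_comm (g h : SL2R) (hc : g * h = h * g) (i j : Fin 2) :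
    g i 0 * h 0 j + g i 1 * h 1 j = h i 0 * g 0 j + h i 1 * g 1 j := by
  have := congrArg (fun M : SL2R => (M : Matrix (Fin 2) (Fin 2) ℝ) i j) hc
  simpa [Matrix.SpecialLinearGroup.coe_mul, Matrix.mul_apply, Fin.sum_univ_two] using this

/-- If `g` is upper triangular and not `±1`, anything commuting with it is upper triangular. -/
lemma tri_of_comm (g h : SL2R) (hg : g 1 0 = 0) (hg1 : g ≠ 1) (hgn1 : g ≠ -1)
    (hc : g * h = h * g) : h 1 0 = 0 := by
  have hdet : g 0 0 * g 1 1 = 1 := by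
    have := g.2; rw [Matrix.det_fin_two] at this; rw [hg] at this; linarith
  have e10 := entry_comm g h hc 1 0
  have e11 := entry_comm g h hc 1 1
  rw [hg] at e10 e11
  -- e10 : g 1 1 * h 1 0 = h 1 0 * g 0 0 + h 1 1 * 0
  -- e11 : g 1 1 * h 1 1 = h 1 0 * g 0 1 + h 1 1 * g 1 1
  have hb : h 1 0 * g 0 1 = 0 := by linarith
  have ha : h 1 0 * (g 0 0 - g 1 1) = 0 := by linarith
  by_contra hne
  have h01 : g 0 1 = 0 := by
    rcases mul_eq_zero.mp hb with h' | h'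
    · exact absurd h' hne
    · exact h'
  have hdiag : g 0 0 = g 1 1 := by
    rcases mul_eq_zero.mp ha with h' | h'
    · exact absurd h' hne
    · linarith
  -- then g 0 0 = g 1 1 = ±1 and g = ±1
  have hsq : g 0 0 * g 0 0 = 1 := by rw [hdiag] at hdet ⊢; linarith [hdet]
  rcases mul_self_eq_one_iff.mp hsq with h1 | h1
  · apply hg1
    apply Matrix.SpecialLinearGroup.ext
    intro i j
    fin_cases i <;> fin_cases j <;>
      simp [Matrix.SpecialLinearGroup.coe_one, Matrix.one_apply, h1, hg, h01, ← hdiag]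
  · apply hgn1
    apply Matrix.SpecialLinearGroup.ext
    intro i j
    have hne1 : ((-1 : SL2R) : Matrix (Fin 2) (Fin 2) ℝ) = -1 := by
      rw [Matrix.SpecialLinearGroup.coe_neg, Matrix.SpecialLinearGroup.coe_one]
    fin_cases i <;> fin_cases j <;>
      simp [hne1, Matrix.one_apply, h1, hg, h01, ← hdiag]


/-- From a cosh comparison, conclude a distance lower bound. -/
lemma lt_dist_of_cosh (r : ℝ) (z w : UpperHalfPlane)
    (h : Real.cosh |r| < Real.cosh (dist z w)) : r < dist z w := by
  by_contra hle
  push_neg at hle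
  have : Real.cosh (dist z w) ≤ Real.cosh |r| := by
    rw [Real.cosh_le_cosh]
    rw [abs_abs, abs_of_nonneg dist_nonneg]
    exact hle.trans (le_abs_self r)
  linarith

lemma cosh_dist_formula (z w : UpperHalfPlane) :
    Real.cosh (dist z w) =
      1 + ((z.re - w.re)^2 + (z.im - w.im)^2) / (2 * z.im * w.im) := by
  rw [UpperHalfPlane.cosh_dist]
  congr 1
  rw [Complex.dist_eq_re_im, Real.sq_sqrt (by positivity)]
  rfl

lemma arith2 (t₀ K y : ℝ) (hK : 1 ≤ K) (hy : 0 < y) :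
    K < 1 + (((|t₀| + 1) * (4 * K + 4) - t₀ * y)^2 + (1 - y)^2) / (2 * 1 * y) := by
  set R := (|t₀| + 1) * (4 * K + 4) with hR_def
  have hy2 : (0:ℝ) < 2 * 1 * y := by positivity
  have key : (K - 1) * (2 * 1 * y) < (R - t₀ * y)^2 + (1 - y)^2 := by
    rcases le_or_gt (2 * K + 2) y with hyy | hyy
    · nlinarith [sq_nonneg (R - t₀ * y), mul_nonneg hy.le (sub_nonneg.mpr hyy)]
    · have ht1 : t₀ * y ≤ |t₀| * (2 * K + 2) := by
        nlinarith [le_abs_self t₀, abs_nonneg t₀]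
      have ht2 : 4 * K + 4 ≤ R - t₀ * y := by
        rw [hR_def]; nlinarith [abs_nonneg t₀]
      nlinarith [mul_self_le_mul_self (by linarith : (0:ℝ) ≤ 4*K+4) ht2,
        sq_nonneg (1 - y)]
  have := (lt_div_iff₀ hy2).mpr key
  linarith

/-- The key estimate in the "triangular" case. -/
lemma far_tri (S : Set SL2R) (hcomm : ∀ a ∈ S, ∀ b ∈ S, a * b = b * a)
    (g : SL2R) (hgS : g ∈ S) (hg1 : g ≠ 1) (hgn1 : g ≠ -1) (hg : g 1 0 = 0)
    (c₀ : UpperHalfPlane) (r : ℝ) :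
    ∃ z : UpperHalfPlane, ∀ h ∈ S, r < dist z (h • c₀) := by
  have htri : ∀ h ∈ S, h 1 0 = 0 := fun h hS =>
    tri_of_comm g h hg hg1 hgn1 (hcomm g hgS h hS)
  by_cases hI : ∀ h ∈ S, (h 0 0)^2 = 1
  · -- all elements preserve the imaginary part
    obtain ⟨z, _, him, hdist⟩ := exists_above c₀ (|r| + 1) (by positivity)
    refine ⟨z, fun h hS => ?_⟩
    have h1 : (h • c₀).im = c₀.im := by
      rw [tri_smul_im h (htri h hS), hI h hS, one_mul]
    have h2 : dist (Real.log z.im) (Real.log (h • c₀).im) = |r| + 1 := by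
      rw [h1, him, Real.log_mul (ne_of_gt c₀.im_pos) (Real.exp_ne_zero _), Real.log_exp,
        Real.dist_eq, add_sub_cancel_left, abs_of_nonneg (by positivity)]
    have := UpperHalfPlane.dist_log_im_le z (h • c₀)
    rw [h2] at this
    linarith [le_abs_self r]
  · push_neg at hI
    obtain ⟨g₀, hg₀S, ha⟩ := hI
    have hg₀ : g₀ 1 0 = 0 := htri g₀ hg₀S
    set a := g₀ 0 0 with ha_def
    set b := g₀ 0 1 with hb_def
    have hdet₀ : a * g₀ 1 1 = 1 := by
      have := g₀.2; rw [Matrix.det_fin_two] at this; rw [hg₀] at this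
      simp only [← ha_def, ← hb_def] at this ⊢; linarith
    have ha2 : a^2 - 1 ≠ 0 := fun h' => ha (by linarith [sq_abs a] )
    set μ := a * b / (a^2 - 1) with hμ_def
    set t₀ := (c₀.re + μ) / c₀.im with ht₀_def
    set K := Real.cosh |r| with hK_def
    have hK : 1 ≤ K := Real.one_le_cosh _
    set R := (|t₀| + 1) * (4 * K + 4) with hR_def
    refine ⟨⟨⟨R - μ, 1⟩, one_pos⟩, fun h hS => ?_⟩
    set z : UpperHalfPlane := ⟨⟨R - μ, 1⟩, one_pos⟩ with hz_def
    have hh10 : h 1 0 = 0 := htri h hS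
    set p := h 0 0 with hp_def
    set q := h 0 1 with hq_def
    have hdeth : p * h 1 1 = 1 := by
      have := h.2; rw [Matrix.det_fin_two] at this; rw [hh10] at this
      simp only [← hp_def, ← hq_def] at this ⊢; linarith
    -- commuting relation forces p * q = μ * (p^2 - 1)
    have hpq : p * q = μ * (p^2 - 1) := by
      have e := entry_comm g₀ h (hcomm g₀ hg₀S h hS) 0 1
      rw [hμ_def, div_mul_eq_mul_div, eq_div_iff ha2]
      linear_combination (a * p) * e + (p * q) * hdet₀ - (a * b) * hdeth
    set w : UpperHalfPlane := h • c₀ with hw_def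
    have hwre : w.re + μ = t₀ * w.im := by
      have h1 : w.re = p^2 * c₀.re + p * q := tri_smul_re h hh10 c₀
      have h2 : w.im = p^2 * c₀.im := tri_smul_im h hh10 c₀
      rw [h1, h2, hpq, ht₀_def]
      field_simp
      ring
    have hwim : 0 < w.im := w.im_pos
    apply lt_dist_of_cosh
    rw [cosh_dist_formula]
    have hzre : z.re = R - μ := rfl
    have hzim : z.im = (1 : ℝ) := rfl
    rw [hzre, hzim, ← hK_def]
    have hre2 : R - μ - w.re = R - t₀ * w.im := by linarith
    rw [hre2, hR_def]
    exact arith2 t₀ K w.im hK hwim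


/-- The elliptic case: a common fixed point in `ℍ`. -/
lemma far_elliptic (S : Set SL2R) (hcomm : ∀ a ∈ S, ∀ b ∈ S, a * b = b * a)
    (g : SL2R) (hgS : g ∈ S) (htr : (g 0 0 + g 1 1)^2 < 4)
    (c₀ : UpperHalfPlane) (r : ℝ) :
    ∃ z : UpperHalfPlane, ∀ h ∈ S, r < dist z (h • c₀) := by
  set a := g 0 0 with ha_def
  set b := g 0 1 with hb_def
  set c := g 1 0 with hc_def
  set d := g 1 1 with hd_def
  have hdet : a * d - b * c = 1 := by
    have := g.2; rw [Matrix.det_fin_two] at this; exact this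
  have hc0 : c ≠ 0 := by
    intro h0
    rw [h0] at hdet
    nlinarith [sq_nonneg (a - d)]
  set x : ℝ := (a - d) / (2 * c) with hx_def
  set s : ℝ := Real.sqrt (4 - (a + d)^2) / (2 * |c|) with hs_def
  have hs_pos : 0 < s := by
    apply div_pos
    · exact Real.sqrt_pos.mpr (by linarith)
    · positivity
  have hs2 : s^2 * (4 * c^2) = 4 - (a + d)^2 := by
    rw [hs_def, div_pow, Real.sq_sqrt (by linarith : (0:ℝ) ≤ 4 - (a + d)^2)]
    rw [mul_pow, sq_abs]
    field_simp
    ring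
  set P : ℂ := ⟨x, s⟩ with hP_def
  have hP_im : P.im = s := rfl
  have hP_re : P.re = x := rfl
  -- P is a root of the fixed point quadratic
  have hroot : (c:ℂ) * P^2 + ((d:ℂ) - a) * P - b = 0 := by
    rw [Complex.ext_iff]
    constructor
    · simp only [Complex.add_re, Complex.sub_re, Complex.mul_re, Complex.ofReal_re,
        Complex.ofReal_im, Complex.zero_re, pow_two, hP_re, hP_im, Complex.sub_im]
      simp only [Complex.mul_im, hP_re, hP_im]
      have hx2 : x = (a - d) / (2 * c) := hx_def
      rw [hx2]
      field_simp
      nlinarith [hs2, hdet, sq_nonneg c]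
    · simp only [Complex.add_im, Complex.sub_im, Complex.mul_im, Complex.mul_re,
        Complex.ofReal_re, Complex.ofReal_im, Complex.zero_im, pow_two, hP_re, hP_im, Complex.sub_re]
      have hx2 : x = (a - d) / (2 * c) := hx_def
      rw [hx2]
      field_simp
      ring
  set p : UpperHalfPlane := ⟨P, hs_pos⟩ with hp_def
  -- any fixed point of g in ℍ equals p
  have hquad : ∀ w : UpperHalfPlane, g • w = w →
      (c:ℂ) * (w:ℂ)^2 + ((d:ℂ) - a) * (w:ℂ) - b = 0 := by
    intro w hw
    have hden : (c:ℂ) * (w:ℂ) + (d:ℂ) ≠ 0 := by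
      intro H
      have : ((c:ℂ) * (w:ℂ) + (d:ℂ)).im = 0 := by rw [H]; rfl
      simp only [Complex.add_im, Complex.mul_im, Complex.ofReal_re, Complex.ofReal_im] at this
      have : c * w.im = 0 := by
        simpa [UpperHalfPlane.coe_im] using this
      rcases mul_eq_zero.mp this with h' | h'
      · exact hc0 h'
      · exact ne_of_gt w.im_pos h'
    have hcoe : ((g • w : UpperHalfPlane) : ℂ) = (w : ℂ) := by rw [hw]
    rw [specialLinearGroup_apply] at hcoe
    simp only [coe_mk, algebraMap_apply, Algebra.algebraMap_self, RingHom.id_apply] at hcoe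
    rw [div_eq_iff hden] at hcoe
    rw [← ha_def, ← hb_def] at hcoe
    linear_combination -hcoe
  have hunique : ∀ w : UpperHalfPlane, g • w = w → w = p := by
    intro w hw
    have h1 := hquad w hw
    have h2 : (c:ℂ) * ((w:ℂ)^2 - P^2) + ((d:ℂ) - a) * ((w:ℂ) - P) = 0 := by
      linear_combination h1 - hroot
    have h3 : ((w:ℂ) - P) * ((c:ℂ) * ((w:ℂ) + P) + ((d:ℂ) - a)) = 0 := by
      linear_combination h2
    rcases mul_eq_zero.mp h3 with h' | h'
    · apply UpperHalfPlane.ext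
      rw [sub_eq_zero] at h'
      exact h'
    · exfalso
      have him := congrArg Complex.im h'
      simp only [Complex.add_im, Complex.mul_im, Complex.ofReal_re, Complex.ofReal_im,
        Complex.sub_im, Complex.zero_im, hP_im] at him
      have : c * (w.im + s) = 0 := by
        simpa [UpperHalfPlane.coe_im] using him
      rcases mul_eq_zero.mp this with h'' | h''
      · exact hc0 h''
      · linarith [w.im_pos]
  have hgp : g • p = p := by
    apply UpperHalfPlane.ext
    rw [specialLinearGroup_apply]
    simp only [coe_mk, algebraMap_apply, Algebra.algebraMap_self, RingHom.id_apply]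
    have hden : (c:ℂ) * P + (d:ℂ) ≠ 0 := by
      intro H
      have him := congrArg Complex.im H
      simp only [Complex.add_im, Complex.mul_im, Complex.ofReal_re, Complex.ofReal_im,
        Complex.zero_im, hP_im, hP_re] at him
      have : c * s = 0 := by linarith
      rcases mul_eq_zero.mp this with h' | h'
      · exact hc0 h'
      · exact ne_of_gt hs_pos h'
    show ((a:ℂ) * P + (b:ℂ)) / ((c:ℂ) * P + (d:ℂ)) = P
    rw [div_eq_iff hden]
    linear_combination -hroot
  have hfixall : ∀ h ∈ S, h • p = p := by
    intro h hS
    apply hunique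
    calc g • h • p = (g * h) • p := (mul_smul _ _ _).symm
    _ = (h * g) • p := by rw [hcomm g hgS h hS]
    _ = h • (g • p) := mul_smul _ _ _
    _ = h • p := by rw [hgp]
  obtain ⟨z, _, _, hdz⟩ := exists_above p (|r| + dist c₀ p + 1)
    (by positivity)
  refine ⟨z, fun h hS => ?_⟩
  have h1 : dist (h • c₀) p = dist c₀ p := by
    conv_lhs => rw [← hfixall h hS]
    exact dist_smul h c₀ p
  have h2 := dist_triangle z (h • c₀) p
  rw [h1, hdz] at h2
  have := le_abs_self r
  linarith


/-- A non-elliptic element can be conjugated to an upper-triangular one. -/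
lemma conj_tri (g : SL2R) (htr : 4 ≤ (g 0 0 + g 1 1)^2) :
    ∃ k : SL2R, (k⁻¹ * g * k) 1 0 = 0 := by
  by_cases hc : g 1 0 = 0
  · exact ⟨1, by simpa using hc⟩
  · set a := g 0 0 with ha_def
    set b := g 0 1 with hb_def
    set c := g 1 0 with hc_def
    set d := g 1 1 with hd_def
    have hdet : a * d - b * c = 1 := by
      have := g.2; rw [Matrix.det_fin_two] at this; exact this
    have hD : (0:ℝ) ≤ (a + d)^2 - 4 := by linarith
    set l : ℝ := ((a + d) + Real.sqrt ((a + d)^2 - 4)) / 2 with hl_def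
    have hl : l^2 - (a + d) * l + 1 = 0 := by
      rw [hl_def]
      have := Real.sq_sqrt hD
      field_simp
      nlinarith [this]
    set v₁ : ℝ := l - d with hv₁_def
    set n : ℝ := v₁^2 + c^2 with hn_def
    have hn_pos : 0 < n := by positivity
    have hn_ne : n ≠ 0 := ne_of_gt hn_pos
    refine ⟨⟨!![v₁, -c/n; c, v₁/n], by
      rw [Matrix.det_fin_two_of]; field_simp; ring⟩, ?_⟩
    set k : SL2R := ⟨!![v₁, -c/n; c, v₁/n], by
      rw [Matrix.det_fin_two_of]; field_simp; ring⟩ with hk_def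
    have hkinv : k⁻¹ = ⟨!![v₁/n, c/n; -c, v₁], by
      rw [Matrix.det_fin_two_of]; field_simp; ring⟩ := by
      rw [Matrix.SpecialLinearGroup.SL2_inv_expl]
      apply Matrix.SpecialLinearGroup.ext
      intro i j
      fin_cases i <;> fin_cases j <;> simp [hk_def, neg_div]
    rw [hkinv]
    show ((⟨!![v₁/n, c/n; -c, v₁], _⟩ * g * k : SL2R) : Matrix (Fin 2) (Fin 2) ℝ) 1 0 = 0
    show (((⟨!![v₁/n, c/n; -c, v₁], _⟩ : SL2R) : Matrix (Fin 2) (Fin 2) ℝ) *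
      (g : Matrix (Fin 2) (Fin 2) ℝ) * (k : Matrix (Fin 2) (Fin 2) ℝ)) 1 0 = 0
    simp [Matrix.mul_apply, Fin.sum_univ_two, hk_def, Matrix.vecMul, dotProduct]
    simp only [hv₁_def]
    rw [← ha_def, ← hb_def, ← hc_def, ← hd_def]
    linear_combination c * hl + c * hdet

/-- No orbit of a commuting set of isometries is coarsely dense. -/
lemma far (S : Set SL2R) (hcomm : ∀ a ∈ S, ∀ b ∈ S, a * b = b * a)
    (c₀ : UpperHalfPlane) (r : ℝ) :
    ∃ z : UpperHalfPlane, ∀ h ∈ S, r < dist z (h • c₀) := by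
  by_cases htriv : ∀ h ∈ S, h = 1 ∨ h = -1
  · obtain ⟨z, _, _, hdz⟩ := exists_above c₀ (|r| + 1) (by positivity)
    refine ⟨z, fun h hS => ?_⟩
    have : h • c₀ = c₀ := by
      rcases htriv h hS with h' | h'
      · rw [h', one_smul]
      · rw [h', neg_one_smul']
    rw [this, hdz]
    linarith [le_abs_self r]
  · push_neg at htriv
    obtain ⟨g, hgS, hg1, hgn1⟩ := htriv
    by_cases htr : (g 0 0 + g 1 1)^2 < 4
    · exact far_elliptic S hcomm g hgS htr c₀ r
    · push_neg at htr
      obtain ⟨k, hk⟩ := conj_tri g htr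
      set S' : Set SL2R := (fun h => k⁻¹ * h * k) '' S with hS'_def
      have hcomm' : ∀ a ∈ S', ∀ b ∈ S', a * b = b * a := by
        rintro _ ⟨x, hx, rfl⟩ _ ⟨y, hy, rfl⟩
        have h1 : k⁻¹ * x * k * (k⁻¹ * y * k) = k⁻¹ * (x * y) * k := by group
        have h2 : k⁻¹ * y * k * (k⁻¹ * x * k) = k⁻¹ * (y * x) * k := by group
        rw [h1, h2, hcomm x hx y hy]
      have hgS' : k⁻¹ * g * k ∈ S' := ⟨g, hgS, rfl⟩
      have hgeq : g = k * (k⁻¹ * g * k) * k⁻¹ := by group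
      have hg1' : k⁻¹ * g * k ≠ 1 := by
        intro H; apply hg1; rw [hgeq, H]; group
      have hgn1' : k⁻¹ * g * k ≠ -1 := by
        intro H; apply hgn1; rw [hgeq, H]
        rw [mul_neg, neg_mul, mul_one, mul_inv_cancel]
      obtain ⟨z, hz⟩ := far_tri S' hcomm' (k⁻¹ * g * k) hgS' hg1' hgn1' hk (k⁻¹ • c₀) r
      refine ⟨k • z, fun h hS => ?_⟩
      have h1 := hz (k⁻¹ * h * k) ⟨h, hS, rfl⟩
      have h2 : (k⁻¹ * h * k) • (k⁻¹ • c₀) = k⁻¹ • (h • c₀) := by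
        rw [← mul_smul, ← mul_smul]
        congr 1
        group
      rw [h2] at h1
      rw [← dist_smul k⁻¹ (k • z) (h • c₀), inv_smul_smul]
      exact h1

end AbelianNotCocompact

/-- An abelian subgroup `G` of `SL(2,ℝ)`, acting on the upper half-plane `ℍ` by Möbius
transformations, cannot act cocompactly: no compact set `C ⊆ ℍ` has `⋃_{g ∈ G} g·C = ℍ`. -/
theorem abelian_subgroup_not_cocompact (G : Subgroup (Matrix.SpecialLinearGroup (Fin 2) ℝ))
    (hab : ∀ a b : G, a * b = b * a) :
    ¬ ∃ C : Set UpperHalfPlane,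
        IsCompact C ∧
        (⋃ g ∈ G, (fun z : UpperHalfPlane =>
          (g : Matrix.SpecialLinearGroup (Fin 2) ℝ) • z) '' C) = Set.univ := by
  rintro ⟨C, hC, hcover⟩
  have hIuniv : (UpperHalfPlane.I : UpperHalfPlane) ∈ (Set.univ : Set UpperHalfPlane) :=
    Set.mem_univ _
  rw [← hcover] at hIuniv
  simp only [Set.mem_iUnion, Set.mem_image] at hIuniv
  obtain ⟨_, _, c₀, hc₀, _⟩ := hIuniv
  obtain ⟨r, hr⟩ := hC.isBounded.subset_closedBall c₀
  have hcomm : ∀ a ∈ (G : Set (Matrix.SpecialLinearGroup (Fin 2) ℝ)),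
      ∀ b ∈ (G : Set (Matrix.SpecialLinearGroup (Fin 2) ℝ)), a * b = b * a := by
    intro x hx y hy
    exact Subtype.ext_iff.mp (hab ⟨x, hx⟩ ⟨y, hy⟩)
  obtain ⟨z, hz⟩ := AbelianNotCocompact.far (G : Set (Matrix.SpecialLinearGroup (Fin 2) ℝ))
    hcomm c₀ r
  have hzmem : z ∈ ⋃ g ∈ G, (fun w : UpperHalfPlane =>
      (g : Matrix.SpecialLinearGroup (Fin 2) ℝ) • w) '' C := hcover ▸ Set.mem_univ z
  simp only [Set.mem_iUnion, Set.mem_image] at hzmem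
  obtain ⟨g, hg, c, hcC, hgc⟩ := hzmem
  have h1 := hz g (SetLike.mem_coe.mpr hg)
  have h2 : dist z (g • c₀) = dist c c₀ := by rw [← hgc, dist_smul]
  have h3 : dist c c₀ ≤ r := by
    have := hr hcC; rwa [Metric.mem_closedBall] at this
  linarith
end
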